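/- Lower bound for harmonic functions via the distortion theorem: let 1 < r < r', let F be a complex-valued function analytic on the open disc { z : |z| < r' } with F(0) = 0, let h(z) = Re F(z), and assume h(z) < C for all z with |z| < r (for some real constant C). Then for every z with |z| = 1, h(z) ≥ −C · (1 + (1 + r⁻¹)/(1 − r⁻¹)³). -/

import Mathlib

/-- Lower bound for harmonic functions via the distortion theorem: let `1 < r < r'`, let
`F` be analytic on the open disc of radius `r'` with `F(0) = 0`, let `h = Re F`, and assume
`h < C` on the open disc of radius `r`. Then `h(z) ≥ −C·(1 + (1 + r⁻¹)/(1 − r⁻¹)³)` for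
every `|z| = 1`. -/
theorem harmonic_lower_bound_distortion (r r' : ℝ) (h1r : 1 < r) (hrr' : r < r')
    (F : ℂ → ℂ) (hF : DifferentiableOn ℂ F (Metric.ball (0 : ℂ) r'))
    (hF0 : F 0 = 0) (C : ℝ)
    (hlt : ∀ z : ℂ, ‖z‖ < r → (F z).re < C) :
    ∀ z : ℂ, ‖z‖ = 1 →
      (F z).re ≥ -C * (1 + (1 + r⁻¹) / (1 - r⁻¹) ^ 3) := by
  intro z hz
  have hC : 0 < C := by
    have h0 : ‖(0 : ℂ)‖ < r := by simpa using lt_trans one_pos h1r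
    have := hlt 0 h0
    simpa [hF0] using this
  set c2 : ℂ := ((2 * C : ℝ) : ℂ) with hc2
  -- the denominator never vanishes on the ball of radius r, and |F w| < |c2 - F w|
  have key : ∀ w : ℂ, ‖w‖ < r → ‖F w‖ < ‖c2 - F w‖ := by
    intro w hw
    have hre := hlt w hw
    have hsq : ‖F w‖ ^ 2 < ‖c2 - F w‖ ^ 2 := by
      rw [Complex.sq_norm, Complex.sq_norm, Complex.normSq_sub]
      have hmul : (c2 * starRingEnd ℂ (F w)).re = 2 * C * (F w).re := by
        simp [hc2, Complex.mul_re]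
      have hnsq : Complex.normSq c2 = (2 * C) ^ 2 := by
        simp [hc2, Complex.normSq_apply]; ring
      rw [hmul, hnsq]
      nlinarith [Complex.normSq_nonneg (F w)]
    exact lt_of_pow_lt_pow_left₀ 2 (norm_nonneg _) hsq
  have hden : ∀ w : ℂ, ‖w‖ < r → c2 - F w ≠ 0 := by
    intro w hw h0
    have hk := key w hw
    rw [h0, norm_zero] at hk
    exact absurd hk (not_lt.mpr (norm_nonneg _))
  set g : ℂ → ℂ := fun w => F w / (c2 - F w) with hg
  have hball : Metric.ball (0 : ℂ) r ⊆ Metric.ball (0 : ℂ) r' :=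
    Metric.ball_subset_ball hrr'.le
  have habs_mem : ∀ w : ℂ, w ∈ Metric.ball (0 : ℂ) r → ‖w‖ < r := by
    intro w hw
    simpa [Metric.mem_ball, dist_zero_right] using hw
  have hgd : DifferentiableOn ℂ g (Metric.ball (0 : ℂ) r) := by
    refine DifferentiableOn.div (hF.mono hball) ?_ ?_
    · exact (differentiableOn_const _).sub (hF.mono hball)
    · intro w hw; exact hden w (habs_mem w hw)
  have hg0 : g 0 = 0 := by simp [hg, hF0]
  have hmaps : Set.MapsTo g (Metric.ball (0 : ℂ) r) (Metric.ball (g 0) 1) := by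
    intro w hw
    rw [hg0, Metric.mem_ball, dist_zero_right]
    have hk := key w (habs_mem w hw)
    have hd := hden w (habs_mem w hw)
    rw [hg]
    simp only [norm_div]
    rw [div_lt_one (norm_pos_iff.mpr hd)]
    exact hk
  have hz_mem : z ∈ Metric.ball (0 : ℂ) r := by
    rw [Metric.mem_ball, dist_zero_right, hz]; exact h1r
  have hgz : ‖g z‖ ≤ 1 / r := by
    have := Complex.dist_le_div_mul_dist_of_mapsTo_ball hgd (hmaps.mono_right Metric.ball_subset_closedBall) hz_mem
    rw [hg0, dist_zero_right, dist_zero_right] at this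
    calc ‖g z‖ = ‖g z‖ := rfl
      _ ≤ 1 / r * ‖z‖ := this
      _ = 1 / r := by rw [hz, mul_one]
  -- recover F z from g z
  have hdz := hden z (by rw [hz]; exact h1r)
  have hFz : F z = g z * (c2 - F z) := by
    rw [hg]; field_simp
  have hr1 : (0 : ℝ) < r - 1 := by linarith
  have hr0 : (0 : ℝ) < r := by linarith
  have hFabs : ‖F z‖ ≤ 2 * C / (r - 1) := by
    have h1 : ‖F z‖ ≤ 1 / r * ‖c2 - F z‖ := by
      have heq : ‖F z‖ = ‖g z‖ * ‖c2 - F z‖ := by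
        conv_lhs => rw [hFz]
        rw [norm_mul]
      rw [heq]
      exact mul_le_mul_of_nonneg_right hgz (norm_nonneg _)
    have h2 : ‖c2 - F z‖ ≤ 2 * C + ‖F z‖ := by
      calc ‖c2 - F z‖ ≤ ‖c2‖ + ‖F z‖ := by
            simpa [sub_eq_add_neg] using norm_add_le c2 (-F z)
        _ = 2 * C + ‖F z‖ := by
            rw [hc2, Complex.norm_real, Real.norm_eq_abs, abs_of_pos (by positivity)]
    have h3 : ‖F z‖ ≤ 1 / r * (2 * C + ‖F z‖) :=
      h1.trans (mul_le_mul_of_nonneg_left h2 (by positivity))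
    have h3' : r * ‖F z‖ ≤ 2 * C + ‖F z‖ := by
      calc r * ‖F z‖ ≤ r * (1 / r * (2 * C + ‖F z‖)) :=
            mul_le_mul_of_nonneg_left h3 hr0.le
        _ = 2 * C + ‖F z‖ := by field_simp
    rw [le_div_iff₀ hr1]
    nlinarith [h3']
  have hre : -(2 * C / (r - 1)) ≤ (F z).re := by
    have h4 : |(F z).re| ≤ ‖F z‖ := Complex.abs_re_le_norm (F z)
    have h5 : -|(F z).re| ≤ (F z).re := neg_abs_le _
    linarith
  -- final algebra: 2C/(r-1) ≤ C(1 + (1+r⁻¹)/(1-r⁻¹)³)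
  have hrne : r ≠ 0 := hr0.ne'
  have hr1ne : r - 1 ≠ 0 := hr1.ne'
  have h1mr : (1 : ℝ) - r⁻¹ = (r - 1) / r := by field_simp
  have h1pr : (1 : ℝ) + r⁻¹ = (r + 1) / r := by field_simp
  have hfrac : (1 + r⁻¹) / (1 - r⁻¹) ^ 3 = r ^ 2 * (r + 1) / (r - 1) ^ 3 := by
    rw [h1mr, h1pr, div_pow]
    field_simp
  have hpoly : (0 : ℝ) ≤ 2 * r ^ 3 - 4 * r ^ 2 + 7 * r - 3 := by
    nlinarith [mul_nonneg (by linarith : (0:ℝ) ≤ 2 * r) (sq_nonneg (r - 1))]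
  have hle : 2 * C / (r - 1) ≤ C * (1 + (1 + r⁻¹) / (1 - r⁻¹) ^ 3) := by
    rw [hfrac]
    have hRHS : C * (1 + r ^ 2 * (r + 1) / (r - 1) ^ 3)
        = C * ((r - 1) ^ 3 + r ^ 2 * (r + 1)) / (r - 1) ^ 3 := by
      field_simp
    rw [hRHS, div_le_div_iff₀ hr1 (by positivity)]
    nlinarith [mul_nonneg (mul_nonneg hC.le hr1.le) hpoly]
  calc (F z).re ≥ -(2 * C / (r - 1)) := hre
    _ ≥ -C * (1 + (1 + r⁻¹) / (1 - r⁻¹) ^ 3) := by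
        rw [neg_mul]; exact neg_le_neg hle
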